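/- Let d ≥ 2. For all ξ,η ∈ S^{d−1} and t,s ∈ [−1,1], the points (tξ,t) and (sη,s) lie on X₀ and satisfy the identity 1 − cos d_{X₀}((tξ,t),(sη,s)) = 1 − cos d_{[−1,1]}(t,s) + t·s·(1 − cos d_S(ξ,η)). Moreover, there exist absolute constants c₁, c₂ > 0 such that whenever t·s ≥ 0, c₁·d_{X₀}((tξ,t),(sη,s)) ≤ d_{[−1,1]}(t,s) + √(ts)·d_S(ξ,η) ≤ c₂·d_{X₀}((tξ,t),(sη,s)). -/

import Mathlib

open MeasureTheory Real Set

noncomputable section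

/-- The double conic surface `X₀ = {(x,t) ∈ ℝ^d × ℝ : ‖x‖ = |t|, |t| ≤ 1}`. -/
def X0 (d : ℕ) : Set (EuclideanSpace ℝ (Fin d) × ℝ) :=
  {p | ‖p.1‖ = |p.2| ∧ |p.2| ≤ 1}

/-- The distance `d_{X₀}((x,t),(y,s)) = arccos(⟨x,y⟩ + √(1−t²)√(1−s²))`. -/
def dX0 {d : ℕ} (p q : EuclideanSpace ℝ (Fin d) × ℝ) : ℝ :=
  Real.arccos ((inner ℝ p.1 q.1 : ℝ) + Real.sqrt (1 - p.2 ^ 2) * Real.sqrt (1 - q.2 ^ 2))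

/-- The cap `c((x,t),r) = {(y,s) ∈ X₀ : d_{X₀}((x,t),(y,s)) ≤ r}`. -/
def cap0 {d : ℕ} (p : EuclideanSpace ℝ (Fin d) × ℝ) (r : ℝ) :
    Set (EuclideanSpace ℝ (Fin d) × ℝ) :=
  {q ∈ X0 d | dX0 p q ≤ r}

/-- The distance `d_{[−1,1]}(t,s) = arccos(ts + √(1−t²)√(1−s²))` on `[−1,1]`. -/
def dI (t s : ℝ) : ℝ := Real.arccos (t * s + Real.sqrt (1 - t ^ 2) * Real.sqrt (1 - s ^ 2))

/-- The geodesic distance `d_S(ξ,η) = arccos⟨ξ,η⟩` on the unit sphere. -/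
def dS {d : ℕ} (ξ η : EuclideanSpace ℝ (Fin d)) : ℝ := Real.arccos (inner ℝ ξ η : ℝ)

lemma one_sub_cos_eq' (x : ℝ) : 1 - Real.cos x = 2 * Real.sin (x/2) ^ 2 := by
  have h := Real.sin_sq_eq_half_sub (x/2)
  rw [show 2 * (x/2) = x by ring] at h
  linarith

lemma one_sub_cos_le_sq' (x : ℝ) : 1 - Real.cos x ≤ x ^ 2 / 2 := by
  rw [one_sub_cos_eq']
  have h : Real.sin (x/2) ^ 2 ≤ (x/2) ^ 2 := Real.sin_sq_le_sq
  nlinarith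

lemma sq_le_one_sub_cos' {x : ℝ} (h0 : 0 ≤ x) (hπ : x ≤ π) :
    2 / π ^ 2 * x ^ 2 ≤ 1 - Real.cos x := by
  rw [one_sub_cos_eq']
  have h1 : 2 / π * (x/2) ≤ Real.sin (x/2) := Real.mul_le_sin (by linarith) (by linarith)
  have h2 : 0 ≤ 2 / π * (x/2) := by positivity
  have h3 : (2 / π * (x/2)) ^ 2 ≤ Real.sin (x/2) ^ 2 := pow_le_pow_left₀ h2 h1 2
  have hπ0 : (π : ℝ) ≠ 0 := Real.pi_ne_zero
  have key : (2 / π * (x/2)) ^ 2 = x ^ 2 / π ^ 2 := by field_simp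
  rw [key] at h3
  rw [div_mul_eq_mul_div, div_le_iff₀ (by positivity)] at *
  nlinarith [Real.pi_pos]

lemma le_of_sq_le_sq' {x y : ℝ} (hx : 0 ≤ x) (hy : 0 ≤ y) (h : x ^ 2 ≤ y ^ 2) : x ≤ y := by
  nlinarith

lemma bound_aux (t s c u v : ℝ) (hu : 0 ≤ u) (hv : 0 ≤ v)
    (hu2 : u ^ 2 = 1 - t ^ 2) (hv2 : v ^ 2 = 1 - s ^ 2) (hc : |c| ≤ 1) :
    -1 ≤ t * s * c + u * v ∧ t * s * c + u * v ≤ 1 := by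
  have h1 : (t * s + u * v) ^ 2 ≤ 1 := by nlinarith [sq_nonneg (t * v - s * u)]
  have h2 : (t * s - u * v) ^ 2 ≤ 1 := by nlinarith [sq_nonneg (t * v + s * u)]
  have h3 : |t * s| + u * v ≤ 1 := by
    rcases abs_cases (t * s) with ⟨h, _⟩ | ⟨h, _⟩ <;> rw [h] <;> nlinarith
  have h4 : |t * s * c| ≤ |t * s| := by
    rw [abs_mul]
    exact mul_le_of_le_one_right (abs_nonneg _) hc
  have h5 := abs_le.mp h4
  have h6 : 0 ≤ u * v := mul_nonneg hu hv
  constructor <;> nlinarith [abs_nonneg (t * s)]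

set_option maxHeartbeats 1000000 in
/-- for `ξ,η ∈ S^{d−1}` and `t,s ∈ [−1,1]`, the points `(tξ,t)` and
`(sη,s)` lie on `X₀` and
`1 − cos d_{X₀}((tξ,t),(sη,s)) = 1 − cos d_{[−1,1]}(t,s) + ts(1 − cos d_S(ξ,η))`;
moreover there are absolute constants `c₁,c₂ > 0` such that whenever `ts ≥ 0`,
`c₁ d_{X₀} ≤ d_{[−1,1]}(t,s) + √(ts) d_S(ξ,η) ≤ c₂ d_{X₀}`. -/
theorem stmt1 (d : ℕ) (hd : 2 ≤ d) :
    (∀ ξ ∈ Metric.sphere (0 : EuclideanSpace ℝ (Fin d)) 1,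
      ∀ η ∈ Metric.sphere (0 : EuclideanSpace ℝ (Fin d)) 1,
      ∀ t ∈ Set.Icc (-1 : ℝ) 1, ∀ s ∈ Set.Icc (-1 : ℝ) 1,
        (t • ξ, t) ∈ X0 d ∧ (s • η, s) ∈ X0 d ∧
        1 - Real.cos (dX0 (t • ξ, t) (s • η, s)) =
          1 - Real.cos (dI t s) + t * s * (1 - Real.cos (dS ξ η))) ∧
    (∃ c₁ c₂ : ℝ, 0 < c₁ ∧ 0 < c₂ ∧
      ∀ ξ ∈ Metric.sphere (0 : EuclideanSpace ℝ (Fin d)) 1,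
        ∀ η ∈ Metric.sphere (0 : EuclideanSpace ℝ (Fin d)) 1,
        ∀ t ∈ Set.Icc (-1 : ℝ) 1, ∀ s ∈ Set.Icc (-1 : ℝ) 1, 0 ≤ t * s →
          c₁ * dX0 (t • ξ, t) (s • η, s) ≤ dI t s + Real.sqrt (t * s) * dS ξ η ∧
          dI t s + Real.sqrt (t * s) * dS ξ η ≤ c₂ * dX0 (t • ξ, t) (s • η, s)) := by
  -- common facts
  have main : ∀ ξ ∈ Metric.sphere (0 : EuclideanSpace ℝ (Fin d)) 1,
      ∀ η ∈ Metric.sphere (0 : EuclideanSpace ℝ (Fin d)) 1,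
      ∀ t ∈ Set.Icc (-1 : ℝ) 1, ∀ s ∈ Set.Icc (-1 : ℝ) 1,
        (t • ξ, t) ∈ X0 d ∧ (s • η, s) ∈ X0 d ∧
        1 - Real.cos (dX0 (t • ξ, t) (s • η, s)) =
          1 - Real.cos (dI t s) + t * s * (1 - Real.cos (dS ξ η)) := by
    intro ξ hξ η hη t ht s hs
    rw [mem_sphere_zero_iff_norm] at hξ hη
    obtain ⟨ht1, ht2⟩ := ht
    obtain ⟨hs1, hs2⟩ := hs
    have habst : |t| ≤ 1 := abs_le.mpr ⟨ht1, ht2⟩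
    have habss : |s| ≤ 1 := abs_le.mpr ⟨hs1, hs2⟩
    have hc : |(inner ℝ ξ η : ℝ)| ≤ 1 := by
      have := abs_real_inner_le_norm ξ η
      rwa [hξ, hη, one_mul] at this
    set c : ℝ := inner ℝ ξ η with hc_def
    set u := Real.sqrt (1 - t ^ 2) with hu_def
    set v := Real.sqrt (1 - s ^ 2) with hv_def
    have hu : 0 ≤ u := Real.sqrt_nonneg _
    have hv : 0 ≤ v := Real.sqrt_nonneg _
    have ht2' : t ^ 2 ≤ 1 := by nlinarith
    have hs2' : s ^ 2 ≤ 1 := by nlinarith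
    have hu2 : u ^ 2 = 1 - t ^ 2 := Real.sq_sqrt (by linarith)
    have hv2 : v ^ 2 = 1 - s ^ 2 := Real.sq_sqrt (by linarith)
    have hb1 := bound_aux t s c u v hu hv hu2 hv2 hc
    have hb2 := bound_aux t s 1 u v hu hv hu2 hv2 (by simp)
    rw [mul_one] at hb2
    have hinner : (inner ℝ (t • ξ) (s • η) : ℝ) = t * s * c := by
      rw [real_inner_smul_left, real_inner_smul_right]; ring
    refine ⟨⟨by simp [X0, norm_smul, hξ], habst⟩, ⟨by simp [X0, norm_smul, hη], habss⟩, ?_⟩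
    unfold dX0 dI dS
    simp only
    rw [hinner, Real.cos_arccos hb1.1 hb1.2, Real.cos_arccos hb2.1 hb2.2,
        Real.cos_arccos (abs_le.mp hc).1 (abs_le.mp hc).2]
    ring
  refine ⟨main, 1/2, 3, by norm_num, by norm_num, ?_⟩
  intro ξ hξ η hη t ht s hs hts
  obtain ⟨hid₀, hid₁, hid⟩ := main ξ hξ η hη t ht s hs
  set A := dX0 (t • ξ, t) (s • η, s) with hA_def
  set a := dI t s with ha_def
  set θ := dS ξ η with hθ_def
  have hA0 : 0 ≤ A := Real.arccos_nonneg _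
  have hAπ : A ≤ π := Real.arccos_le_pi _
  have ha0 : 0 ≤ a := Real.arccos_nonneg _
  have hθ0 : 0 ≤ θ := Real.arccos_nonneg _
  have hθπ : θ ≤ π := Real.arccos_le_pi _
  set b := Real.sqrt (t * s) * θ with hb_def
  have hb0 : 0 ≤ b := mul_nonneg (Real.sqrt_nonneg _) hθ0
  have hbsq : b ^ 2 = t * s * θ ^ 2 := by
    rw [hb_def, mul_pow, Real.sq_sqrt hts]
  -- bounds relating E := 1 - cos to squares
  have hEA_lo : 2 / π ^ 2 * A ^ 2 ≤ 1 - Real.cos A := sq_le_one_sub_cos' hA0 hAπ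
  have hEA_hi : 1 - Real.cos A ≤ A ^ 2 / 2 := one_sub_cos_le_sq' A
  have hEa_lo : 2 / π ^ 2 * a ^ 2 ≤ 1 - Real.cos a := sq_le_one_sub_cos' ha0 (Real.arccos_le_pi _)
  have hEa_hi : 1 - Real.cos a ≤ a ^ 2 / 2 := one_sub_cos_le_sq' a
  have hEθ_lo : 2 / π ^ 2 * θ ^ 2 ≤ 1 - Real.cos θ := sq_le_one_sub_cos' hθ0 hθπ
  have hEθ_hi : 1 - Real.cos θ ≤ θ ^ 2 / 2 := one_sub_cos_le_sq' θ
  have hπ4 : π ≤ 4 := Real.pi_le_four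
  have hπ2 : 0 < π ^ 2 := by positivity
  have hπ0 := Real.pi_pos
  -- E = (1 - cos a) + ts (1 - cos θ)
  -- upper bound on E in terms of (a+b)^2 and lower bound
  have hE_hi : 1 - Real.cos A ≤ (a + b) ^ 2 / 2 := by
    rw [hid]
    have h1 : t * s * (1 - Real.cos θ) ≤ t * s * (θ ^ 2 / 2) :=
      mul_le_mul_of_nonneg_left hEθ_hi hts
    nlinarith [mul_nonneg ha0 hb0]
  have hE_lo : 2 / π ^ 2 * (a ^ 2 + b ^ 2) ≤ 1 - Real.cos A := by
    rw [hid]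
    have h1 : t * s * (2 / π ^ 2 * θ ^ 2) ≤ t * s * (1 - Real.cos θ) :=
      mul_le_mul_of_nonneg_left hEθ_lo hts
    have h2 : 2 / π ^ 2 * b ^ 2 = t * s * (2 / π ^ 2 * θ ^ 2) := by rw [hbsq]; ring
    have h3 : 2 / π ^ 2 * (a ^ 2 + b ^ 2) = 2 / π ^ 2 * a ^ 2 + 2 / π ^ 2 * b ^ 2 := by ring
    linarith
  clear_value A a θ b
  clear main hξ hη hid₀ hid₁
  have hπ16 : π ^ 2 ≤ 16 := by nlinarith
  have hab0 : 0 ≤ a + b := by linarith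
  constructor
  · -- (1/2) A ≤ a + b
    have key : 2 / π ^ 2 * A ^ 2 ≤ (a + b) ^ 2 / 2 := le_trans hEA_lo hE_hi
    rw [div_mul_eq_mul_div, div_le_iff₀ hπ2] at key
    have h16 : (a + b) ^ 2 / 2 * π ^ 2 ≤ (a + b) ^ 2 / 2 * 16 :=
      mul_le_mul_of_nonneg_left hπ16 (by positivity)
    have hsq : A ^ 2 ≤ (2 * (a + b)) ^ 2 := by
      have : (2 * (a + b)) ^ 2 = 4 * (a + b) ^ 2 := by ring
      linarith
    have := le_of_sq_le_sq' hA0 (by linarith) hsq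
    linarith
  · -- a + b ≤ 3 A
    have key : 2 / π ^ 2 * (a ^ 2 + b ^ 2) ≤ A ^ 2 / 2 := le_trans hE_lo hEA_hi
    rw [div_mul_eq_mul_div, div_le_iff₀ hπ2] at key
    have habsq : (a + b) ^ 2 ≤ 2 * (a ^ 2 + b ^ 2) := by nlinarith [sq_nonneg (a - b)]
    have h16 : A ^ 2 / 2 * π ^ 2 ≤ A ^ 2 / 2 * 16 :=
      mul_le_mul_of_nonneg_left hπ16 (by positivity)
    have hsq : (a + b) ^ 2 ≤ (3 * A) ^ 2 := by
      have : (3 * A) ^ 2 = 9 * A ^ 2 := by ring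
      nlinarith [sq_nonneg A]
    have := le_of_sq_le_sq' hab0 (by linarith) hsq
    linarith
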